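/- Let U: ℝ^M → U(d) be differentiable at θ, let H be Hermitian, ψ₀ a unit vector, and J(θ) = ⟨ψ₀| U(θ)† H U(θ) |ψ₀⟩. Then ∂J/∂θ_j = Tr{ [H, U(θ)|ψ₀⟩⟨ψ₀|U(θ)†]† · (∂_j U(θ)) U(θ)† }, i.e., the Euclidean gradient component equals the Hilbert–Schmidt inner product of the Riemannian gradient [H, |ψ(θ)⟩⟨ψ(θ)|] with the tangent direction. -/

import Mathlib

open Matrix
open scoped Matrix.Norms.L2Operator

/-- trace of `vecMulVec x y * B` is a sandwich. -/
theorem trace_vecMulVec_mul {d : ℕ} (x y : Fin d → ℂ) (B : Matrix (Fin d) (Fin d) ℂ) :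
    (Matrix.vecMulVec x y * B).trace = y ⬝ᵥ (B.mulVec x) := by
  simp only [Matrix.trace, Matrix.diag, Matrix.mul_apply, Matrix.vecMulVec_apply,
    Matrix.mulVec, dotProduct, Finset.mul_sum]
  rw [Finset.sum_comm]
  apply Finset.sum_congr rfl
  intro i _
  apply Finset.sum_congr rfl
  intro k _
  ring

/-- For a parameterized unitary `U : ℝ^M → U(d)` differentiable at `θ`,
Hermitian `H`, unit vector `ψ₀`, and `J(θ) = ⟨ψ₀|U(θ)† H U(θ)|ψ₀⟩`, the partial derivative
`∂J/∂θ_j` equals the Hilbert–Schmidt inner product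
`Tr{[H, |ψ(θ)⟩⟨ψ(θ)|]† ⬝ (∂_j U(θ)) U(θ)†}` of the Riemannian gradient with the tangent
direction, where `|ψ(θ)⟩ = U(θ)|ψ₀⟩`. -/
theorem vqe_gradient_decomposition
    {d M : ℕ} (H : Matrix (Fin d) (Fin d) ℂ) (hH : H.IsHermitian)
    (ψ₀ : Fin d → ℂ) (hψ₀ : star ψ₀ ⬝ᵥ ψ₀ = 1)
    (U : (Fin M → ℝ) → Matrix (Fin d) (Fin d) ℂ)
    (hU : ∀ θ, U θ ∈ Matrix.unitaryGroup (Fin d) ℂ)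
    (θ : Fin M → ℝ) (U' : (Fin M → ℝ) →L[ℝ] Matrix (Fin d) (Fin d) ℂ)
    (hdiff : HasFDerivAt U U' θ) (j : Fin M) :
    HasDerivAt
      (fun t : ℝ =>
        (star ψ₀ ⬝ᵥ ((U (Function.update θ j t))ᴴ * H * U (Function.update θ j t)).mulVec ψ₀).re)
      (((H * vecMulVec ((U θ).mulVec ψ₀) (star ((U θ).mulVec ψ₀)) -
            vecMulVec ((U θ).mulVec ψ₀) (star ((U θ).mulVec ψ₀)) * H)ᴴ *
          (U' (Pi.single j 1) * (U θ)ᴴ)).trace.re)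
      (θ j) := by
  set A := U θ with hA
  set V := U' (Pi.single j 1) with hVdef
  -- conjTranspose as a continuous ℝ-linear map
  let ctL : Matrix (Fin d) (Fin d) ℂ →ₗ[ℝ] Matrix (Fin d) (Fin d) ℂ :=
    { toFun := conjTranspose
      map_add' := fun x y => conjTranspose_add x y
      map_smul' := fun c x => by
        ext i k
        simp [conjTranspose_apply, Complex.ext_iff] }
  let ct : Matrix (Fin d) (Fin d) ℂ →L[ℝ] Matrix (Fin d) (Fin d) ℂ :=
    ctL.toContinuousLinearMap
  have hct : ∀ m, ct m = mᴴ := fun m => rfl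
  -- unitarity facts
  have hA1 : Aᴴ * A = 1 := by
    have := (Matrix.mem_unitaryGroup_iff').mp (hU θ)
    simpa [Matrix.star_eq_conjTranspose] using this
  have hA2 : A * Aᴴ = 1 := by
    have := (Matrix.mem_unitaryGroup_iff).mp (hU θ)
    simpa [Matrix.star_eq_conjTranspose] using this
  -- derivative of the unitarity constraint : V * Aᴴ + A * Vᴴ = 0
  have hctU : HasFDerivAt (fun θ' => (U θ')ᴴ) (ct.comp U') θ :=
    by have := ct.hasFDerivAt.comp θ hdiff; exact this
  have hD : HasFDerivAt (fun θ' => U θ' * (U θ')ᴴ)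
      (A • (ct.comp U') + U'.smulRight Aᴴ) θ := hdiff.mul' hctU
  have hDconst : HasFDerivAt (fun _ : Fin M → ℝ => (1 : Matrix (Fin d) (Fin d) ℂ))
      (A • (ct.comp U') + U'.smulRight Aᴴ) θ := by
    have hfun : (fun θ' => U θ' * (U θ')ᴴ)
        = (fun _ : Fin M → ℝ => (1 : Matrix (Fin d) (Fin d) ℂ)) := by
      funext θ'
      have := (Matrix.mem_unitaryGroup_iff).mp (hU θ')
      simpa [Matrix.star_eq_conjTranspose] using this
    rwa [hfun] at hD
  have hzero : (A • (ct.comp U') + U'.smulRight Aᴴ)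
      = (0 : (Fin M → ℝ) →L[ℝ] Matrix (Fin d) (Fin d) ℂ) :=
    hDconst.unique (hasFDerivAt_const _ _)
  have hV0 : A * Vᴴ + V * Aᴴ = 0 := by
    have := congrFun (congrArg DFunLike.coe hzero) (Pi.single j 1)
    simpa [hct, smul_eq_mul, hVdef] using this
  have hAV : Aᴴ * V = -(Vᴴ * A) := by
    have h1 : V * Aᴴ = -(A * Vᴴ) := by
      rw [eq_neg_iff_add_eq_zero, add_comm]; exact hV0
    calc Aᴴ * V = Aᴴ * V * (Aᴴ * A) := by rw [hA1, mul_one]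
      _ = Aᴴ * (V * Aᴴ) * A := by noncomm_ring
      _ = Aᴴ * (-(A * Vᴴ)) * A := by rw [h1]
      _ = -((Aᴴ * A) * (Vᴴ * A)) := by noncomm_ring
      _ = -(Vᴴ * A) := by rw [hA1, one_mul]
  -- derivative of the matrix-valued curve
  have hup : HasDerivAt (fun t : ℝ => Function.update θ j t) (Pi.single j 1) (θ j) :=
    hasDerivAt_update θ j (θ j)
  have hf : HasDerivAt (fun t : ℝ => U (Function.update θ j t)) V (θ j) := by
    have hdiff' : HasFDerivAt U U' (Function.update θ j (θ j)) := by
      rw [Function.update_eq_self]; exact hdiff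
    exact hdiff'.comp_hasDerivAt (θ j) hup
  have hfT : HasDerivAt (fun t : ℝ => (U (Function.update θ j t))ᴴ) Vᴴ (θ j) := by
    have := ct.hasFDerivAt.comp_hasDerivAt (θ j) hf
    simpa [hct, Function.comp_def] using this
  have hM : HasDerivAt
      (fun t : ℝ => (U (Function.update θ j t))ᴴ * H * U (Function.update θ j t))
      (Vᴴ * H * A + Aᴴ * H * V) (θ j) := by
    have h1 : HasDerivAt (fun t : ℝ => (U (Function.update θ j t))ᴴ * H)
        (Vᴴ * H) (θ j) := hfT.mul_const H
    have := h1.mul hf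
    simpa [Function.update_eq_self, Pi.mul_def] using this
  -- the sesquilinear form as a continuous ℝ-linear map
  let LL : Matrix (Fin d) (Fin d) ℂ →ₗ[ℝ] ℂ :=
    { toFun := fun m => star ψ₀ ⬝ᵥ m.mulVec ψ₀
      map_add' := fun x y => by simp [Matrix.add_mulVec]
      map_smul' := fun c x => by
        simp only [Matrix.mulVec, dotProduct, RingHom.id_apply, Finset.smul_sum]
        apply Finset.sum_congr rfl
        intro i _
        simp [Finset.mul_sum, Finset.smul_sum, Complex.real_smul]
        ring_nf }
  let L : Matrix (Fin d) (Fin d) ℂ →L[ℝ] ℂ := LL.toContinuousLinearMap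
  have hL : ∀ m, L m = star ψ₀ ⬝ᵥ m.mulVec ψ₀ := fun m => rfl
  have hcomp : HasDerivAt
      (fun t : ℝ =>
        (star ψ₀ ⬝ᵥ ((U (Function.update θ j t))ᴴ * H * U (Function.update θ j t)).mulVec ψ₀).re)
      ((star ψ₀ ⬝ᵥ ((Vᴴ * H * A + Aᴴ * H * V).mulVec ψ₀)).re) (θ j) := by
    have h1 := L.hasFDerivAt.comp_hasDerivAt (θ j) hM
    have h2 := Complex.reCLM.hasFDerivAt.comp_hasDerivAt (θ j) h1
    simpa [hL, Function.comp_def] using h2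
  -- the trace identity
  have key : ((H * vecMulVec (A.mulVec ψ₀) (star (A.mulVec ψ₀)) -
            vecMulVec (A.mulVec ψ₀) (star (A.mulVec ψ₀)) * H)ᴴ *
          (V * Aᴴ)).trace
      = star ψ₀ ⬝ᵥ ((Vᴴ * H * A + Aᴴ * H * V).mulVec ψ₀) := by
    set ψ := A.mulVec ψ₀ with hψ
    set P := vecMulVec ψ (star ψ) with hP
    have hPH : Pᴴ = P := by
      ext i k
      simp [hP, Matrix.vecMulVec_apply, Matrix.conjTranspose_apply, mul_comm]
    have hct2 : (H * P - P * H)ᴴ = P * H - H * P := by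
      rw [Matrix.conjTranspose_sub, Matrix.conjTranspose_mul, Matrix.conjTranspose_mul,
        hPH, hH.eq]
    rw [hct2, Matrix.sub_mul, Matrix.trace_sub]
    have t1 : (P * H * (V * Aᴴ)).trace = star ψ ⬝ᵥ ((H * V * Aᴴ).mulVec ψ) := by
      rw [hP, show P * H * (V * Aᴴ) = vecMulVec ψ (star ψ) * (H * V * Aᴴ) by
        rw [hP]; noncomm_ring]
      exact trace_vecMulVec_mul _ _ _
    have t2 : (H * P * (V * Aᴴ)).trace = star ψ ⬝ᵥ ((V * Aᴴ * H).mulVec ψ) := by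
      have : H * P * (V * Aᴴ) = H * (P * (V * Aᴴ)) := by noncomm_ring
      rw [this, Matrix.trace_mul_comm, show P * (V * Aᴴ) * H = vecMulVec ψ (star ψ) * (V * Aᴴ * H) by rw [hP]; noncomm_ring]
      exact trace_vecMulVec_mul _ _ _
    have sand : ∀ B : Matrix (Fin d) (Fin d) ℂ,
        star ψ ⬝ᵥ (B.mulVec ψ) = star ψ₀ ⬝ᵥ ((Aᴴ * B * A).mulVec ψ₀) := by
      intro B
      simp [hψ, Matrix.star_mulVec, Matrix.dotProduct_mulVec, Matrix.vecMul_vecMul,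
        Matrix.mul_assoc]
    rw [t1, t2, sand, sand]
    have e1 : Aᴴ * (H * V * Aᴴ) * A = Aᴴ * H * V := by
      calc Aᴴ * (H * V * Aᴴ) * A = Aᴴ * H * V * (Aᴴ * A) := by noncomm_ring
        _ = Aᴴ * H * V := by rw [hA1, mul_one]
    have e2 : Aᴴ * (V * Aᴴ * H) * A = -(Vᴴ * H * A) := by
      calc Aᴴ * (V * Aᴴ * H) * A = (Aᴴ * V) * (Aᴴ * H * A) := by noncomm_ring
        _ = -(Vᴴ * A) * (Aᴴ * H * A) := by rw [hAV]
        _ = -(Vᴴ * (A * Aᴴ) * H * A) := by noncomm_ring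
        _ = -(Vᴴ * H * A) := by rw [hA2, mul_one]
    rw [e1, e2, Matrix.add_mulVec, dotProduct_add, Matrix.neg_mulVec,
      dotProduct_neg, sub_neg_eq_add, add_comm]
  rw [key]
  exact hcomp
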